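/- Let (Ω, 𝓕, μ) be a finite measure space and let f, g, h be real-valued measurable functions on Ω such that g ∈ L^1(Ω, μ), ∫_Ω g dμ = 0, the essential range of f is contained in {−1, 0, 1}, and |h| ≤ 1 μ-a.e. Let G = {x : g(x) ≠ 0} be the support of g and G^c its complement. Then I_{G^c,G}(f,g,h) + I_{G,G^c}(f,g,h) ≤ 2 ∫_G ∫_{G^c} |g(y)| · 1_𝓕(x,y) · 1_𝓗(x,y) dμ(x) dμ(y). -/

import Mathlib

open MeasureTheory ENNReal

/-- `I_{A,B}(f,g,h) = ∫_A (∫_B (f(x)+f(y))(g(x)-g(y))h(y) dμ(x)) dμ(y)`,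
the outer variable `y` ranging over `A` and the inner variable `x` over `B`. -/
noncomputable def oscI {Ω : Type*} [MeasurableSpace Ω] (μ : Measure Ω)
    (A B : Set Ω) (f g h : Ω → ℝ) : ℝ :=
  ∫ y in A, (∫ x in B, (f x + f y) * (g x - g y) * h y ∂μ) ∂μ

/-- The grid-like function `1_𝓤(x,y) = max(1_{supp u}(x), 1_{supp u}(y))`
associated with a function `u`. -/
noncomputable def gridFn {Ω : Type*} (u : Ω → ℝ) (x y : Ω) : ℝ :=
  max (Set.indicator {z | u z ≠ 0} (fun _ => (1 : ℝ)) x)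
    (Set.indicator {z | u z ≠ 0} (fun _ => (1 : ℝ)) y)

private lemma gridFn_eq {Ω : Type*} (u : Ω → ℝ) (x y : Ω) :
    gridFn u x y = max (if u x ≠ 0 then (1:ℝ) else 0) (if u y ≠ 0 then (1:ℝ) else 0) := by
  simp [gridFn, Set.indicator_apply, Set.mem_setOf_eq]

private lemma gridFn_nonneg {Ω : Type*} (u : Ω → ℝ) (x y : Ω) : 0 ≤ gridFn u x y := by
  rw [gridFn_eq]; split_ifs <;> norm_num

private lemma gridFn_le_one {Ω : Type*} (u : Ω → ℝ) (x y : Ω) : gridFn u x y ≤ 1 := by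
  rw [gridFn_eq]; split_ifs <;> norm_num

private lemma key_ineq {a s b t : ℝ}
    (ha : a = -1 ∨ a = 0 ∨ a = 1) (hs : s = -1 ∨ s = 0 ∨ s = 1)
    (hb : |b| ≤ 1) (ht : |t| ≤ 1) :
    |(a + s) * (b - t) - 2 * (a * b)| ≤
      2 * max (if a ≠ 0 then (1:ℝ) else 0) (if s ≠ 0 then (1:ℝ) else 0) *
        max (if b ≠ 0 then (1:ℝ) else 0) (if t ≠ 0 then (1:ℝ) else 0) := by
  have hb1 := abs_le.mp hb
  have ht1 := abs_le.mp ht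
  by_cases hA : a = 0 ∧ s = 0
  · obtain ⟨rfl, rfl⟩ := hA; simp
  · by_cases hB : b = 0 ∧ t = 0
    · obtain ⟨rfl, rfl⟩ := hB
      have : (a + s) * (0 - 0) - 2 * (a * 0) = 0 := by ring
      rw [this, abs_zero]
      positivity
    · have hF : max (if a ≠ 0 then (1:ℝ) else 0) (if s ≠ 0 then (1:ℝ) else 0) = 1 := by
        rcases not_and_or.mp hA with h|h <;> split_ifs <;> simp_all
      have hH : max (if b ≠ 0 then (1:ℝ) else 0) (if t ≠ 0 then (1:ℝ) else 0) = 1 := by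
        rcases not_and_or.mp hB with h|h <;> split_ifs <;> simp_all
      rw [hF, hH]
      rw [abs_le]
      constructor <;> rcases ha with rfl|rfl|rfl <;> rcases hs with rfl|rfl|rfl <;>
        nlinarith [hb1.1, hb1.2, ht1.1, ht1.2]

/-- Lemma 3.1: if `g ∈ L^1` has zero mean, the essential range of `f` is contained in
`{-1,0,1}`, and `|h| ≤ 1` a.e., then, with `G = supp g`,
`I_{Gᶜ,G}(f,g,h) + I_{G,Gᶜ}(f,g,h) ≤ 2 ∫_G ∫_{Gᶜ} |g(y)| 1_𝓕(x,y) 1_𝓗(x,y) dμ(x) dμ(y)`. -/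
theorem lemma31
    {Ω : Type*} [MeasurableSpace Ω] (μ : Measure Ω) [IsFiniteMeasure μ]
    (f g h : Ω → ℝ) (hf : Measurable f) (hg : Measurable g) (hh : Measurable h)
    (hgi : Integrable g μ) (hg0 : ∫ x, g x ∂μ = 0)
    (hfr : ∀ᵐ x ∂μ, f x = -1 ∨ f x = 0 ∨ f x = 1)
    (hh1 : ∀ᵐ x ∂μ, |h x| ≤ 1) :
    oscI μ {x | g x ≠ 0}ᶜ {x | g x ≠ 0} f g h + oscI μ {x | g x ≠ 0} {x | g x ≠ 0}ᶜ f g h ≤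
      2 * ∫ y in {x | g x ≠ 0},
            (∫ x in {x | g x ≠ 0}ᶜ, |g y| * gridFn f x y * gridFn h x y ∂μ) ∂μ := by

  set G : Set Ω := {x | g x ≠ 0} with hGdef
  have hG : MeasurableSet G := (hg (measurableSet_singleton 0)).compl
  -- a.e. norm bounds
  have hfb : ∀ᵐ x ∂μ, ‖f x‖ ≤ 1 := by
    filter_upwards [hfr] with x hx
    rcases hx with h1|h1|h1 <;> simp [h1]
  have hhb : ∀ᵐ x ∂μ, ‖h x‖ ≤ 1 := by
    filter_upwards [hh1] with x hx; simpa using hx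
  -- integrability
  have hif : Integrable f μ := Integrable.mono' (integrable_const 1) hf.aestronglyMeasurable hfb
  have hih : Integrable h μ := Integrable.mono' (integrable_const 1) hh.aestronglyMeasurable hhb
  have hifh : Integrable (fun x => f x * h x) μ := by
    refine Integrable.mono' (integrable_const 1) (hf.mul hh).aestronglyMeasurable ?_
    filter_upwards [hfb, hhb] with x h1 h2
    calc ‖f x * h x‖ = ‖f x‖ * ‖h x‖ := norm_mul _ _
    _ ≤ 1 * 1 := mul_le_mul h1 h2 (norm_nonneg _) zero_le_one
    _ = 1 := one_mul 1
  have hifg : Integrable (fun x => f x * g x) μ := by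
    refine Integrable.mono' hgi.abs (hf.mul hg).aestronglyMeasurable ?_
    filter_upwards [hfb] with x h1
    calc ‖f x * g x‖ = ‖f x‖ * ‖g x‖ := norm_mul _ _
    _ ≤ 1 * ‖g x‖ := mul_le_mul_of_nonneg_right h1 (norm_nonneg _)
    _ = |g x| := by rw [one_mul, Real.norm_eq_abs]
  have high : Integrable (fun x => g x * h x) μ := by
    refine Integrable.mono' hgi.abs (hg.mul hh).aestronglyMeasurable ?_
    filter_upwards [hhb] with x h1
    calc ‖g x * h x‖ = ‖g x‖ * ‖h x‖ := norm_mul _ _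
    _ ≤ ‖g x‖ * 1 := mul_le_mul_of_nonneg_left h1 (norm_nonneg _)
    _ = |g x| := by rw [mul_one, Real.norm_eq_abs]
  have hifgh : Integrable (fun x => f x * g x * h x) μ := by
    refine Integrable.mono' hgi.abs ((hf.mul hg).mul hh).aestronglyMeasurable ?_
    filter_upwards [hfb, hhb] with x h1 h2
    calc ‖f x * g x * h x‖ = ‖f x‖ * ‖g x‖ * ‖h x‖ := by rw [norm_mul, norm_mul]
    _ ≤ 1 * ‖g x‖ * 1 := by
        apply mul_le_mul (mul_le_mul_of_nonneg_right h1 (norm_nonneg _)) h2 (norm_nonneg _)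
        positivity
    _ = |g x| := by rw [one_mul, mul_one, Real.norm_eq_abs]
  -- zero mean on G
  have hA0 : ∫ x in G, g x ∂μ = 0 := by
    have h1 : ∫ x in Gᶜ, g x ∂μ = ∫ x in Gᶜ, (0:ℝ) ∂μ :=
      setIntegral_congr_fun hG.compl fun x hx => not_not.mp hx
    have h2 := integral_add_compl hG hgi
    rw [h1, integral_zero] at *
    linarith [h2.trans hg0]
  -- osc1
  have osc1 : oscI μ Gᶜ G f g h
      = (∫ x in G, f x * g x ∂μ) * (∫ y in Gᶜ, h y ∂μ)
        + (∫ x in G, g x ∂μ) * (∫ y in Gᶜ, f y * h y ∂μ) := by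
    have inner1 : ∀ y : Ω, g y = 0 → (∫ x in G, (f x + f y) * (g x - g y) * h y ∂μ)
        = (∫ x in G, f x * g x ∂μ) * h y + (∫ x in G, g x ∂μ) * (f y * h y) := by
      intro y hy0
      rw [setIntegral_congr_fun hG
        (show Set.EqOn (fun x => (f x + f y) * (g x - g y) * h y)
          (fun x => f x * g x * h y + g x * (f y * h y)) G from fun x _ => by
            show (f x + f y) * (g x - g y) * h y = f x * g x * h y + g x * (f y * h y)
            rw [hy0]; ring)]
      rw [integral_add ((hifg.integrableOn).mul_const _) ((hgi.integrableOn).mul_const _),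
        integral_mul_const, integral_mul_const]
    calc oscI μ Gᶜ G f g h
        = ∫ y in Gᶜ, ((∫ x in G, f x * g x ∂μ) * h y
            + (∫ x in G, g x ∂μ) * (f y * h y)) ∂μ :=
          setIntegral_congr_fun hG.compl fun y hy => inner1 y (not_not.mp hy)
      _ = _ := by
          rw [integral_add ((hih.integrableOn).const_mul _) ((hifh.integrableOn).const_mul _),
            integral_const_mul, integral_const_mul]
  -- osc2
  have osc2 : oscI μ G Gᶜ f g h
      = (-(∫ x in Gᶜ, f x ∂μ)) * (∫ y in G, g y * h y ∂μ)
        + (-(μ Gᶜ).toReal) * (∫ y in G, f y * g y * h y ∂μ) := by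
    have inner2 : ∀ y : Ω, (∫ x in Gᶜ, (f x + f y) * (g x - g y) * h y ∂μ)
        = (-(∫ x in Gᶜ, f x ∂μ)) * (g y * h y) + (-(μ Gᶜ).toReal) * (f y * g y * h y) := by
      intro y
      rw [setIntegral_congr_fun hG.compl
        (show Set.EqOn (fun x => (f x + f y) * (g x - g y) * h y)
          (fun x => f x * (-(g y) * h y) + f y * (-(g y) * h y)) Gᶜ from fun x hx => by
            show (f x + f y) * (g x - g y) * h y = f x * (-(g y) * h y) + f y * (-(g y) * h y)
            rw [not_not.mp hx]; ring)]
      rw [integral_add ((hif.integrableOn).mul_const _) (integrable_const _),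
        integral_mul_const, integral_const, measureReal_restrict_apply_univ, Measure.real, smul_eq_mul]
      ring
    calc oscI μ G Gᶜ f g h
        = ∫ y in G, ((-(∫ x in Gᶜ, f x ∂μ)) * (g y * h y)
            + (-(μ Gᶜ).toReal) * (f y * g y * h y)) ∂μ :=
          setIntegral_congr_fun hG fun y _ => inner2 y
      _ = _ := by
          rw [integral_add ((high.integrableOn).const_mul _) ((hifgh.integrableOn).const_mul _),
            integral_const_mul, integral_const_mul]
  -- the centered double integral M
  have minner : ∀ y : Ω,
      (∫ x in Gᶜ, g y * ((f x + f y) * (h x - h y) - 2 * (f x * h x)) ∂μ)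
      = (-(∫ x in Gᶜ, f x * h x ∂μ)) * g y
        + ((-(∫ x in Gᶜ, f x ∂μ)) * (g y * h y)
          + ((∫ x in Gᶜ, h x ∂μ) * (f y * g y)
            + (-(μ Gᶜ).toReal) * (f y * g y * h y))) := by
    intro y
    rw [setIntegral_congr_fun hG.compl
      (show Set.EqOn (fun x => g y * ((f x + f y) * (h x - h y) - 2 * (f x * h x)))
        (fun x => (f x * h x) * (-(g y)) + (f x * (-(g y) * h y)
          + (h x * (f y * g y) + (-(g y) * (f y * h y))))) Gᶜ from fun x _ => by
          show g y * ((f x + f y) * (h x - h y) - 2 * (f x * h x))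
            = (f x * h x) * (-(g y)) + (f x * (-(g y) * h y)
              + (h x * (f y * g y) + (-(g y) * (f y * h y))))
          ring)]
    rw [integral_add ((hifh.integrableOn).mul_const _)
        (show Integrable (fun x => f x * (-(g y) * h y)
            + (h x * (f y * g y) + -(g y) * (f y * h y))) (μ.restrict Gᶜ) from
          ((hif.integrableOn).mul_const _).add
            (((hih.integrableOn).mul_const _).add (integrable_const _))),
      integral_add ((hif.integrableOn).mul_const _)
        (show Integrable (fun x => h x * (f y * g y) + -(g y) * (f y * h y)) (μ.restrict Gᶜ) from
          ((hih.integrableOn).mul_const _).add (integrable_const _)),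
      integral_add ((hih.integrableOn).mul_const _) (integrable_const _),
      integral_mul_const, integral_mul_const, integral_mul_const,
      integral_const, measureReal_restrict_apply_univ, Measure.real, smul_eq_mul]
    ring
  have hMeq : (∫ y in G, (∫ x in Gᶜ, g y * ((f x + f y) * (h x - h y) - 2 * (f x * h x)) ∂μ) ∂μ)
      = (-(∫ x in Gᶜ, f x * h x ∂μ)) * (∫ y in G, g y ∂μ)
        + ((-(∫ x in Gᶜ, f x ∂μ)) * (∫ y in G, g y * h y ∂μ)
          + ((∫ x in Gᶜ, h x ∂μ) * (∫ y in G, f y * g y ∂μ)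
            + (-(μ Gᶜ).toReal) * (∫ y in G, f y * g y * h y ∂μ))) := by
    calc (∫ y in G, (∫ x in Gᶜ, g y * ((f x + f y) * (h x - h y) - 2 * (f x * h x)) ∂μ) ∂μ)
        = ∫ y in G, ((-(∫ x in Gᶜ, f x * h x ∂μ)) * g y
            + ((-(∫ x in Gᶜ, f x ∂μ)) * (g y * h y)
              + ((∫ x in Gᶜ, h x ∂μ) * (f y * g y)
                + (-(μ Gᶜ).toReal) * (f y * g y * h y)))) ∂μ :=
          setIntegral_congr_fun hG fun y _ => minner y
      _ = _ := by
          rw [integral_add ((hgi.integrableOn).const_mul _)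
              (show Integrable (fun y => (-(∫ x in Gᶜ, f x ∂μ)) * (g y * h y)
                  + ((∫ x in Gᶜ, h x ∂μ) * (f y * g y)
                    + (-(μ Gᶜ).toReal) * (f y * g y * h y))) (μ.restrict G) from
                ((high.integrableOn).const_mul _).add
                  (((hifg.integrableOn).const_mul _).add ((hifgh.integrableOn).const_mul _))),
            integral_add ((high.integrableOn).const_mul _)
              (show Integrable (fun y => (∫ x in Gᶜ, h x ∂μ) * (f y * g y)
                  + (-(μ Gᶜ).toReal) * (f y * g y * h y)) (μ.restrict G) from
                ((hifg.integrableOn).const_mul _).add ((hifgh.integrableOn).const_mul _)),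
            integral_add ((hifg.integrableOn).const_mul _) ((hifgh.integrableOn).const_mul _),
            integral_const_mul, integral_const_mul, integral_const_mul, integral_const_mul]
  -- measurability helpers
  have hindF : Measurable (Set.indicator {z | f z ≠ 0} (fun _ => (1:ℝ))) :=
    measurable_const.indicator (hf (measurableSet_singleton 0)).compl
  have hindH : Measurable (Set.indicator {z | h z ≠ 0} (fun _ => (1:ℝ))) :=
    measurable_const.indicator (hh (measurableSet_singleton 0)).compl
  have hQeq : ∀ y : Ω, (∫ x in Gᶜ, |g y| * gridFn f x y * gridFn h x y ∂μ)
      = |g y| * ∫ x in Gᶜ, gridFn f x y * gridFn h x y ∂μ := by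
    intro y
    simp only [mul_assoc]
    exact integral_const_mul _ _
  have hR : StronglyMeasurable (fun y => ∫ x in Gᶜ, gridFn f x y * gridFn h x y ∂μ) := by
    have hk : StronglyMeasurable (fun p : Ω × Ω => gridFn f p.2 p.1 * gridFn h p.2 p.1) :=
      (((hindF.comp measurable_snd).max (hindF.comp measurable_fst)).mul
        ((hindH.comp measurable_snd).max (hindH.comp measurable_fst))).stronglyMeasurable
    exact hk.integral_prod_right'
  have intQ : Integrable (fun y => ∫ x in Gᶜ, |g y| * gridFn f x y * gridFn h x y ∂μ)
      (μ.restrict G) := by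
    refine Integrable.mono' (((hgi.abs.const_mul ((μ Gᶜ).toReal))).integrableOn) ?_ ?_
    · exact ((hg.abs.stronglyMeasurable.mul hR).aestronglyMeasurable).restrict.congr
        (ae_of_all _ fun y => (hQeq y).symm)
    · refine ae_of_all _ fun y => ?_
      have h1 : ‖∫ x in Gᶜ, gridFn f x y * gridFn h x y ∂μ‖
          ≤ 1 * (μ.restrict Gᶜ Set.univ).toReal := by
        refine norm_integral_le_of_norm_le_const (ae_of_all _ fun x => ?_)
        rw [Real.norm_eq_abs, abs_le]
        constructor <;>
          nlinarith [gridFn_nonneg f x y, gridFn_le_one f x y,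
            gridFn_nonneg h x y, gridFn_le_one h x y]
      rw [Measure.restrict_apply_univ, one_mul, Real.norm_eq_abs] at h1
      rw [hQeq y, Real.norm_eq_abs, abs_mul, abs_abs]
      calc |g y| * |∫ x in Gᶜ, gridFn f x y * gridFn h x y ∂μ|
          ≤ |g y| * (μ Gᶜ).toReal := mul_le_mul_of_nonneg_left h1 (abs_nonneg _)
        _ = (μ Gᶜ).toReal * |g y| := mul_comm _ _
  -- the main inequality
  have final : (∫ y in G, (∫ x in Gᶜ, g y * ((f x + f y) * (h x - h y) - 2 * (f x * h x)) ∂μ) ∂μ)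
      ≤ 2 * ∫ y in G, (∫ x in Gᶜ, |g y| * gridFn f x y * gridFn h x y ∂μ) ∂μ := by
    rw [← integral_const_mul]
    refine integral_mono_ae ?_ (intQ.const_mul 2) ?_
    · exact ((show Integrable (fun y => (-(∫ x in Gᶜ, f x * h x ∂μ)) * g y
          + ((-(∫ x in Gᶜ, f x ∂μ)) * (g y * h y)
            + ((∫ x in Gᶜ, h x ∂μ) * (f y * g y)
              + (-(μ Gᶜ).toReal) * (f y * g y * h y)))) (μ.restrict G) from
        ((hgi.integrableOn).const_mul _).add
          (((high.integrableOn).const_mul _).add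
            (((hifg.integrableOn).const_mul _).add ((hifgh.integrableOn).const_mul _)))).congr
        (ae_of_all _ fun y => (minner y).symm))
    · filter_upwards [ae_restrict_of_ae hfr, ae_restrict_of_ae hh1] with y hfy hhy
      have step : (∫ x in Gᶜ, g y * ((f x + f y) * (h x - h y) - 2 * (f x * h x)) ∂μ)
          ≤ ∫ x in Gᶜ, 2 * (|g y| * gridFn f x y * gridFn h x y) ∂μ := by
        refine integral_mono_ae ?_ ?_ ?_
        · exact ((show Integrable (fun x => f x * h x * (-(g y)) + (f x * (-(g y) * h y)
              + (h x * (f y * g y) + (-(g y)) * (f y * h y)))) (μ.restrict Gᶜ) from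
            ((hifh.integrableOn).mul_const _).add
              (((hif.integrableOn).mul_const _).add
                (((hih.integrableOn).mul_const _).add (integrable_const _)))).congr
            (ae_of_all _ fun x => by
              show f x * h x * (-(g y)) + (f x * (-(g y) * h y)
                  + (h x * (f y * g y) + (-(g y)) * (f y * h y)))
                = g y * ((f x + f y) * (h x - h y) - 2 * (f x * h x))
              ring))
        · have m1 : Measurable (fun x => gridFn f x y) := hindF.max measurable_const
          have m2 : Measurable (fun x => gridFn h x y) := hindH.max measurable_const
          refine Integrable.mono' (integrable_const (2 * |g y|))
            ((measurable_const.mul ((measurable_const.mul m1).mul m2)).aestronglyMeasurable)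
            (ae_of_all _ fun x => ?_)
          have e0 : 0 ≤ |g y| * gridFn f x y * gridFn h x y :=
            mul_nonneg (mul_nonneg (abs_nonneg _) (gridFn_nonneg _ _ _)) (gridFn_nonneg _ _ _)
          rw [Real.norm_eq_abs, abs_of_nonneg (by linarith)]
          nlinarith [mul_nonneg (mul_nonneg (abs_nonneg (g y))
              (sub_nonneg.mpr (gridFn_le_one f x y))) (gridFn_nonneg h x y),
            mul_nonneg (abs_nonneg (g y)) (sub_nonneg.mpr (gridFn_le_one h x y))]
        · filter_upwards [ae_restrict_of_ae hfr, ae_restrict_of_ae hh1] with x hfx hhx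
          have hk := key_ineq hfx hfy hhx hhy
          rw [← gridFn_eq f x y, ← gridFn_eq h x y] at hk
          calc g y * ((f x + f y) * (h x - h y) - 2 * (f x * h x))
              ≤ |g y * ((f x + f y) * (h x - h y) - 2 * (f x * h x))| := le_abs_self _
            _ = |g y| * |(f x + f y) * (h x - h y) - 2 * (f x * h x)| := abs_mul _ _
            _ ≤ |g y| * (2 * gridFn f x y * gridFn h x y) :=
                mul_le_mul_of_nonneg_left hk (abs_nonneg _)
            _ = 2 * (|g y| * gridFn f x y * gridFn h x y) := by ring
      calc (∫ x in Gᶜ, g y * ((f x + f y) * (h x - h y) - 2 * (f x * h x)) ∂μ)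
          ≤ ∫ x in Gᶜ, 2 * (|g y| * gridFn f x y * gridFn h x y) ∂μ := step
        _ = 2 * ∫ x in Gᶜ, |g y| * gridFn f x y * gridFn h x y ∂μ := by
            simp only [mul_assoc]
            exact integral_const_mul _ _
  have hsum : oscI μ Gᶜ G f g h + oscI μ G Gᶜ f g h
      = ∫ y in G, (∫ x in Gᶜ, g y * ((f x + f y) * (h x - h y) - 2 * (f x * h x)) ∂μ) ∂μ := by
    rw [osc1, osc2, hMeq, hA0]; ring
  rw [hsum]
  exact final
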